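/- Let k be a positive integer, and let λ and μ be partitions (of arbitrary positive integers) each having at least k parts of size at least k. Let D be a translate of the Ferrers diagram of λ with apex at (a1, b1), and let E be a translate of the Ferrers diagram of μ with apex at (a2, b2), where a1 ≤ a2 and b1 ≤ b2. If D and E are non-overlapping, then a2 + b2 ≥ a1 + b1 + k. -/
import Mathlib


open Filter Real

/-- The Ferrers diagram of a partition: the cell `(j, i)` (column `j`, row `i`)
belongs iff `1 ≤ j`, `1 ≤ i`, and at least `i` parts are `≥ j`
(i.e. row `i` has length `≥ j`). -/
def ferrersDiagram {n : ℕ} (lam : Nat.Partition n) : Set (ℤ × ℤ) :=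
  {c | 1 ≤ c.1 ∧ 1 ≤ c.2 ∧ c.2 ≤ ((lam.parts.filter (fun x => c.1 ≤ (x : ℤ))).card : ℤ)}

/-- The translate of the Ferrers diagram of `lam` with apex at `(a, b)`. -/
def placedFerrers {n : ℕ} (lam : Nat.Partition n) (a b : ℤ) : Set (ℤ × ℤ) :=
  (fun c : ℤ × ℤ => (c.1 + a - 1, c.2 + b - 1)) '' ferrersDiagram lam

/-- The number `p(n)` of partitions of `n`. -/
def numPartitions (n : ℕ) : ℕ := Fintype.card (Nat.Partition n)

/-- The rectangle `R_n` of width `p(n)` and height `n`. -/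
def rectR (n : ℕ) : Set (ℤ × ℤ) :=
  {c | 1 ≤ c.1 ∧ c.1 ≤ (numPartitions n : ℤ) ∧ 1 ≤ c.2 ∧ c.2 ≤ (n : ℤ)}

/-- A partition with at least `k` parts of size `≥ k` contains the whole
`k × k` square in its Ferrers diagram. -/
lemma square_subset_ferrers {n k : ℕ} (lam : Nat.Partition n)
    (hlam : k ≤ (lam.parts.filter fun x => k ≤ x).card)
    (j i : ℤ) (hj1 : 1 ≤ j) (hjk : j ≤ (k : ℤ)) (hi1 : 1 ≤ i) (hik : i ≤ (k : ℤ)) :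
    (j, i) ∈ ferrersDiagram lam := by
  refine ⟨hj1, hi1, ?_⟩
  have h1 : (lam.parts.filter fun x => k ≤ x) ≤
      lam.parts.filter fun x : ℕ => j ≤ (x : ℤ) :=
    Multiset.monotone_filter_right (p := fun x : ℕ => k ≤ x)
      (q := fun x : ℕ => j ≤ (x : ℤ)) lam.parts
      (fun x hx => le_trans hjk (by exact_mod_cast hx))
  have h2 := le_trans hlam (Multiset.card_le_card h1)
  simp only [ferrersDiagram, Set.mem_setOf_eq]
  simp only [Bind.bind, Pure.pure, Multiset.bind_singleton]
  rw [Multiset.filter_map, Multiset.card_map]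
  calc i ≤ (k : ℤ) := hik
    _ ≤ _ := by exact_mod_cast h2

theorem apex_diagonal_separation (k : ℕ) (hk : 0 < k)
    (n1 n2 : ℕ) (hn1 : 0 < n1) (hn2 : 0 < n2)
    (lam : Nat.Partition n1) (mu : Nat.Partition n2)
    (hlam : k ≤ (lam.parts.filter fun x => k ≤ x).card)
    (hmu : k ≤ (mu.parts.filter fun x => k ≤ x).card)
    (a1 b1 a2 b2 : ℤ) (ha : a1 ≤ a2) (hb : b1 ≤ b2)
    (hdisj : Disjoint (placedFerrers lam a1 b1) (placedFerrers mu a2 b2)) :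
    a1 + b1 + (k : ℤ) ≤ a2 + b2 := by
  by_contra hlt
  push_neg at hlt
  -- the cell (a2, b2) lies in both placed diagrams
  have hD : (a2, b2) ∈ placedFerrers lam a1 b1 := by
    refine ⟨(a2 - a1 + 1, b2 - b1 + 1), ?_, by simp [Prod.ext_iff]; constructor <;> ring⟩
    exact square_subset_ferrers lam hlam _ _ (by omega) (by omega) (by omega) (by omega)
  have hE : (a2, b2) ∈ placedFerrers mu a2 b2 := by
    refine ⟨(1, 1), ?_, by simp⟩
    exact square_subset_ferrers mu hmu 1 1 le_rfl (by exact_mod_cast hk) le_rfl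
      (by exact_mod_cast hk)
  exact Set.disjoint_left.mp hdisj hD hE
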